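/- Let X be a real Banach space, A : X → Set X an accretive operator with zer A ≠ ∅, and for each γ > 0 let J_γ : X → X be a resolvent function of A. Let α ∈ [0,1), f : X → X an α-contraction, x ∈ X, (α_n) a sequence in [0,1], (λ_n) a sequence in (0,∞), and (x_n) the VAM iteration x_0 = x, x_{n+1} = α_n • f(x_n) + (1 − α_n) • J_{λ_n}(x_n). Assume σ₁ is a rate of divergence of Σ_{n=0}^∞ α_n, σ₂ is a Cauchy modulus of Σ_{n=0}^∞ |α_n − α_{n+1}|, and γ₁ is a Cauchy modulus of Σ_{n=0}^∞ |1 − λ_{n+1}/λ_n|. Let z ∈ zer A and K*_z ∈ ℕ, K*_z ≥ 1, with K*_z ≥ max{‖x − z‖, ‖f(z) − z‖/(1 − α)}. Define χ*(k) = max{σ₂(4K*_z(k+1) − 1), γ₁(4K*_z(k+1) − 1)} and Φ*(k) = σ₁(⌈(χ*(2k+1) + 1 + ⌈ln(4K*_z(k+1))⌉)/(1 − α)⌉ + 1). Then Φ* is a rate of asymptotic regularity of (x_n): for all k ∈ ℕ and all n ≥ Φ*(k), ‖x_{n+1} − x_n‖ ≤ 1/(k+1). -/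

import Mathlib

set_option maxHeartbeats 2000000 in
/-- Rate of asymptotic regularity of the VAM iteration (no error terms). -/
theorem stmt_15 {X : Type*} [NormedAddCommGroup X] [NormedSpace ℝ X] [CompleteSpace X]
    (A : X → Set X)
    (hA : ∀ x y u v : X, u ∈ A x → v ∈ A y → ∀ γ : ℝ, 0 < γ →
      ‖x - y‖ ≤ ‖x - y + γ • (u - v)‖)
    (hzer : ∃ z : X, (0 : X) ∈ A z)
    (Jr : ℝ → X → X)
    (hJ : ∀ γ : ℝ, 0 < γ → ∀ x : X, γ⁻¹ • (x - Jr γ x) ∈ A (Jr γ x))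
    (α : ℝ) (hα0 : 0 ≤ α) (hα1 : α < 1)
    (f : X → X) (hf : ∀ x y : X, ‖f x - f y‖ ≤ α * ‖x - y‖)
    (x : X)
    (a : ℕ → ℝ) (ha : ∀ n, a n ∈ Set.Icc (0 : ℝ) 1)
    (lam : ℕ → ℝ) (hlam : ∀ n, 0 < lam n)
    (xs : ℕ → X) (hxs0 : xs 0 = x)
    (hxs : ∀ n : ℕ, xs (n + 1) = a n • f (xs n) + (1 - a n) • Jr (lam n) (xs n))
    -- σ₁ is a rate of divergence of Σ a n
    (σ₁ : ℕ → ℕ) (hσ₁ : ∀ n : ℕ, (n : ℝ) ≤ ∑ i ∈ Finset.range (σ₁ n + 1), a i)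
    -- σ₂ is a Cauchy modulus of Σ |a n - a (n+1)|
    (σ₂ : ℕ → ℕ)
    (hσ₂ : ∀ k : ℕ, ∀ n, σ₂ k ≤ n → ∀ p : ℕ,
      ∑ i ∈ Finset.Icc (n + 1) (n + p), |a i - a (i + 1)| ≤ 1 / (k + 1))
    -- γ₁ is a Cauchy modulus of Σ |1 - lam (n+1) / lam n|
    (γ₁ : ℕ → ℕ)
    (hγ₁ : ∀ k : ℕ, ∀ n, γ₁ k ≤ n → ∀ p : ℕ,
      ∑ i ∈ Finset.Icc (n + 1) (n + p), |1 - lam (i + 1) / lam i| ≤ 1 / (k + 1))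
    (z : X) (hz : (0 : X) ∈ A z)
    (Kz : ℕ) (hKz1 : 1 ≤ Kz)
    (hKz : max ‖x - z‖ (‖f z - z‖ / (1 - α)) ≤ (Kz : ℝ))
    (χ : ℕ → ℕ)
    (hχ : ∀ k : ℕ, χ k = max (σ₂ (4 * Kz * (k + 1) - 1)) (γ₁ (4 * Kz * (k + 1) - 1)))
    (Φ : ℕ → ℕ)
    (hΦ : ∀ k : ℕ, Φ k =
      σ₁ (⌈((χ (2 * k + 1) + 1 + ⌈Real.log ((4 * Kz * (k + 1) : ℕ) : ℝ)⌉₊ : ℕ) : ℝ) /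
        (1 - α)⌉₊ + 1)) :
    ∀ k : ℕ, ∀ n, Φ k ≤ n → ‖xs (n + 1) - xs n‖ ≤ 1 / (k + 1) := by

  intro k n hn
  have h1α : (0:ℝ) < 1 - α := by linarith
  set K : ℝ := (Kz : ℝ) with hKdef
  have hK1 : (1:ℝ) ≤ K := by rw [hKdef]; exact_mod_cast hKz1
  have hK0 : (0:ℝ) < K := by linarith
  have hxz : ‖x - z‖ ≤ K := le_trans (le_max_left _ _) hKz
  have hfz : ‖f z - z‖ ≤ (1-α) * K := by
    have h := le_trans (le_max_right _ _) hKz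
    rw [div_le_iff₀ h1α] at h
    linarith
  -- z is a fixed point of every resolvent
  have hJz : ∀ γ : ℝ, 0 < γ → Jr γ z = z := by
    intro γ hγ
    have h := hA (Jr γ z) z (γ⁻¹ • (z - Jr γ z)) 0 (hJ γ hγ z) hz γ hγ
    have he : Jr γ z - z + γ • (γ⁻¹ • (z - Jr γ z) - 0) = 0 := by
      rw [sub_zero, smul_smul, mul_inv_cancel₀ (ne_of_gt hγ), one_smul]; abel
    rw [he, norm_zero] at h
    have := norm_nonneg (Jr γ z - z)
    have h0 : ‖Jr γ z - z‖ = 0 := le_antisymm h this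
    rw [norm_eq_zero, sub_eq_zero] at h0
    exact h0
  -- resolvents are nonexpansive
  have hJne : ∀ γ : ℝ, 0 < γ → ∀ u v : X, ‖Jr γ u - Jr γ v‖ ≤ ‖u - v‖ := by
    intro γ hγ u v
    have h := hA (Jr γ u) (Jr γ v) _ _ (hJ γ hγ u) (hJ γ hγ v) γ hγ
    have he : Jr γ u - Jr γ v + γ • (γ⁻¹ • (u - Jr γ u) - γ⁻¹ • (v - Jr γ v)) = u - v := by
      rw [smul_sub, smul_smul, smul_smul, mul_inv_cancel₀ (ne_of_gt hγ), one_smul, one_smul]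
      abel
    rw [he] at h
    exact h
  -- resolvent identity estimate
  have hJvar : ∀ γ μ : ℝ, 0 < γ → 0 < μ → ∀ u : X,
      ‖Jr γ u - Jr μ u‖ ≤ |1 - γ/μ| * ‖u - Jr μ u‖ := by
    intro γ μ hγ hμ u
    have h := hA (Jr γ u) (Jr μ u) _ _ (hJ γ hγ u) (hJ μ hμ u) γ hγ
    have he : Jr γ u - Jr μ u + γ • (γ⁻¹ • (u - Jr γ u) - μ⁻¹ • (u - Jr μ u))
        = (1 - γ/μ) • (u - Jr μ u) := by
      rw [smul_sub, smul_smul, smul_smul, mul_inv_cancel₀ (ne_of_gt hγ), one_smul,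
        sub_smul, one_smul, div_eq_mul_inv]
      abel
    rw [he, norm_smul, Real.norm_eq_abs] at h
    exact h
  -- boundedness
  have hbd : ∀ m : ℕ, ‖xs m - z‖ ≤ K := by
    intro m
    induction m with
    | zero => rw [hxs0]; exact hxz
    | succ m ih =>
      have ham := ha m
      have hfb : ‖f (xs m) - z‖ ≤ K := by
        calc ‖f (xs m) - z‖ ≤ ‖f (xs m) - f z‖ + ‖f z - z‖ := norm_sub_le_norm_sub_add_norm_sub _ _ _
        _ ≤ α * ‖xs m - z‖ + (1-α) * K := add_le_add (hf _ _) hfz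
        _ ≤ α * K + (1-α) * K := by nlinarith [ih]
        _ = K := by ring
      have hJb : ‖Jr (lam m) (xs m) - z‖ ≤ K := by
        calc ‖Jr (lam m) (xs m) - z‖ = ‖Jr (lam m) (xs m) - Jr (lam m) z‖ := by
              rw [hJz (lam m) (hlam m)]
        _ ≤ ‖xs m - z‖ := hJne _ (hlam m) _ _
        _ ≤ K := ih
      rw [hxs m]
      have he : a m • f (xs m) + (1 - a m) • Jr (lam m) (xs m) - z
          = a m • (f (xs m) - z) + (1 - a m) • (Jr (lam m) (xs m) - z) := by
        rw [smul_sub, smul_sub, sub_smul, one_smul, sub_smul, one_smul]; abel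
      rw [he]
      calc ‖a m • (f (xs m) - z) + (1 - a m) • (Jr (lam m) (xs m) - z)‖
          ≤ a m * ‖f (xs m) - z‖ + (1 - a m) * ‖Jr (lam m) (xs m) - z‖ := by
            refine le_trans (norm_add_le _ _) ?_
            rw [norm_smul, norm_smul, Real.norm_eq_abs, Real.norm_eq_abs,
              abs_of_nonneg ham.1, abs_of_nonneg (by linarith [ham.2])]
      _ ≤ a m * K + (1 - a m) * K := by
            have := ham.1; have := ham.2
            gcongr <;> linarith
      _ = K := by ring
  -- distance and residual bounds
  have hsb : ∀ m : ℕ, ‖xs (m+1) - xs m‖ ≤ 2*K := by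
    intro m
    calc ‖xs (m+1) - xs m‖ = ‖(xs (m+1) - z) - (xs m - z)‖ := by abel_nf
    _ ≤ ‖xs (m+1) - z‖ + ‖xs m - z‖ := norm_sub_le _ _
    _ ≤ 2*K := by linarith [hbd (m+1), hbd m]
  have hJxb : ∀ m : ℕ, ‖xs m - Jr (lam m) (xs m)‖ ≤ 2*K := by
    intro m
    have hJb : ‖Jr (lam m) (xs m) - z‖ ≤ K := by
      calc ‖Jr (lam m) (xs m) - z‖ = ‖Jr (lam m) (xs m) - Jr (lam m) z‖ := by
            rw [hJz (lam m) (hlam m)]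
      _ ≤ ‖xs m - z‖ := hJne _ (hlam m) _ _
      _ ≤ K := hbd m
    calc ‖xs m - Jr (lam m) (xs m)‖ = ‖(xs m - z) - (Jr (lam m) (xs m) - z)‖ := by abel_nf
    _ ≤ ‖xs m - z‖ + ‖Jr (lam m) (xs m) - z‖ := norm_sub_le _ _
    _ ≤ 2*K := by linarith [hbd m]
  have hfJb : ∀ m : ℕ, ‖f (xs m) - Jr (lam m) (xs m)‖ ≤ 2*K := by
    intro m
    have hJb : ‖Jr (lam m) (xs m) - z‖ ≤ K := by
      calc ‖Jr (lam m) (xs m) - z‖ = ‖Jr (lam m) (xs m) - Jr (lam m) z‖ := by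
            rw [hJz (lam m) (hlam m)]
      _ ≤ ‖xs m - z‖ := hJne _ (hlam m) _ _
      _ ≤ K := hbd m
    have hfb : ‖f (xs m) - z‖ ≤ K := by
      calc ‖f (xs m) - z‖ ≤ ‖f (xs m) - f z‖ + ‖f z - z‖ := norm_sub_le_norm_sub_add_norm_sub _ _ _
      _ ≤ α * ‖xs m - z‖ + (1-α) * K := add_le_add (hf _ _) hfz
      _ ≤ α * K + (1-α) * K := by nlinarith [hbd m]
      _ = K := by ring
    calc ‖f (xs m) - Jr (lam m) (xs m)‖ = ‖(f (xs m) - z) - (Jr (lam m) (xs m) - z)‖ := by abel_nf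
    _ ≤ ‖f (xs m) - z‖ + ‖Jr (lam m) (xs m) - z‖ := norm_sub_le _ _
    _ ≤ 2*K := by linarith
  -- key recurrence
  have hrec : ∀ m : ℕ, ‖xs (m+1+1) - xs (m+1)‖ ≤
      (1 - (1-α) * a (m+1)) * ‖xs (m+1) - xs m‖
      + 2*K * (|a (m+1) - a m| + |1 - lam (m+1) / lam m|) := by
    intro m
    have ham := ha m
    have ham1 := ha (m+1)
    have habstract : ∀ (a0 a1 : ℝ) (F0 F1 G0 G1 : X),
        (a1 • F1 + (1 - a1) • G1) - (a0 • F0 + (1 - a0) • G0)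
        = a1 • (F1 - F0) + (a1 - a0) • (F0 - G0) + (1 - a1) • (G1 - G0) := by
      intros a0 a1 F0 F1 G0 G1
      module
    have hdecomp : xs (m+1+1) - xs (m+1)
        = a (m+1) • (f (xs (m+1)) - f (xs m))
          + (a (m+1) - a m) • (f (xs m) - Jr (lam m) (xs m))
          + (1 - a (m+1)) • (Jr (lam (m+1)) (xs (m+1)) - Jr (lam m) (xs m)) := by
      calc xs (m+1+1) - xs (m+1)
          = (a (m+1) • f (xs (m+1)) + (1 - a (m+1)) • Jr (lam (m+1)) (xs (m+1)))
            - (a m • f (xs m) + (1 - a m) • Jr (lam m) (xs m)) := by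
            rw [← hxs m, ← hxs (m+1)]
      _ = _ := habstract _ _ _ _ _ _
    have hJJ : ‖Jr (lam (m+1)) (xs (m+1)) - Jr (lam m) (xs m)‖ ≤
        ‖xs (m+1) - xs m‖ + |1 - lam (m+1) / lam m| * (2*K) := by
      calc ‖Jr (lam (m+1)) (xs (m+1)) - Jr (lam m) (xs m)‖
          ≤ ‖Jr (lam (m+1)) (xs (m+1)) - Jr (lam (m+1)) (xs m)‖
            + ‖Jr (lam (m+1)) (xs m) - Jr (lam m) (xs m)‖ :=
            norm_sub_le_norm_sub_add_norm_sub _ _ _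
      _ ≤ ‖xs (m+1) - xs m‖ + |1 - lam (m+1) / lam m| * ‖xs m - Jr (lam m) (xs m)‖ :=
            add_le_add (hJne _ (hlam (m+1)) _ _) (hJvar _ _ (hlam (m+1)) (hlam m) _)
      _ ≤ ‖xs (m+1) - xs m‖ + |1 - lam (m+1) / lam m| * (2*K) := by
            have := mul_le_mul_of_nonneg_left (hJxb m) (abs_nonneg (1 - lam (m+1) / lam m))
            linarith
    rw [hdecomp]
    have step1 : ‖a (m+1) • (f (xs (m+1)) - f (xs m))
          + (a (m+1) - a m) • (f (xs m) - Jr (lam m) (xs m))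
          + (1 - a (m+1)) • (Jr (lam (m+1)) (xs (m+1)) - Jr (lam m) (xs m))‖
        ≤ a (m+1) * ‖f (xs (m+1)) - f (xs m)‖
          + |a (m+1) - a m| * ‖f (xs m) - Jr (lam m) (xs m)‖
          + (1 - a (m+1)) * ‖Jr (lam (m+1)) (xs (m+1)) - Jr (lam m) (xs m)‖ := by
      refine le_trans (norm_add₃_le) ?_
      rw [norm_smul, norm_smul, norm_smul, Real.norm_eq_abs, Real.norm_eq_abs,
        Real.norm_eq_abs, abs_of_nonneg ham1.1, abs_of_nonneg (by linarith [ham1.2] : (0:ℝ) ≤ 1 - a (m+1))]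
    refine le_trans step1 ?_
    have t1 : a (m+1) * ‖f (xs (m+1)) - f (xs m)‖ ≤ a (m+1) * (α * ‖xs (m+1) - xs m‖) :=
      mul_le_mul_of_nonneg_left (hf _ _) ham1.1
    have t2 : |a (m+1) - a m| * ‖f (xs m) - Jr (lam m) (xs m)‖ ≤ |a (m+1) - a m| * (2*K) :=
      mul_le_mul_of_nonneg_left (hfJb m) (abs_nonneg _)
    have t3 : (1 - a (m+1)) * ‖Jr (lam (m+1)) (xs (m+1)) - Jr (lam m) (xs m)‖
        ≤ (1 - a (m+1)) * (‖xs (m+1) - xs m‖ + |1 - lam (m+1) / lam m| * (2*K)) :=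
      mul_le_mul_of_nonneg_left hJJ (by linarith [ham1.2])
    have t5 : (1 - a (m+1)) * (|1 - lam (m+1) / lam m| * (2*K)) ≤ |1 - lam (m+1) / lam m| * (2*K) :=
      mul_le_of_le_one_left (by positivity) (by linarith [ham1.1])
    nlinarith [t1, t2, t3, t5]
  -- main quantitative argument
  obtain ⟨N, hNdef⟩ : ∃ N, χ (2*k+1) = N := ⟨_, rfl⟩
  obtain ⟨L, hLdef⟩ : ∃ L, ⌈Real.log ((4 * Kz * (k + 1) : ℕ) : ℝ)⌉₊ = L := ⟨_, rfl⟩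
  rw [hΦ k, hNdef, hLdef] at hn
  obtain ⟨Mn, hMdef⟩ : ∃ M, ⌈((N + 1 + L : ℕ) : ℝ) / (1 - α)⌉₊ = M := ⟨_, rfl⟩
  rw [hMdef] at hn
  have hMreal' : ((N + 1 + L : ℕ) : ℝ) / (1 - α) ≤ (Mn : ℝ) := hMdef ▸ Nat.le_ceil _
  -- basic facts about Mn
  have hMge : ((N:ℝ) + 1 + L) ≤ (1 - α) * Mn := by
    rw [div_le_iff₀ h1α] at hMreal'
    push_cast at hMreal'
    linarith
  have hMN : N + 1 + L ≤ Mn := by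
    have h0 : (0:ℝ) ≤ (Mn : ℝ) := Nat.cast_nonneg _
    have h2 : (1 - α) * (Mn : ℝ) ≤ (Mn : ℝ) := mul_le_of_le_one_left h0 (by linarith)
    have h1 : ((N:ℝ) + 1 + L) ≤ (Mn : ℝ) := by linarith
    exact_mod_cast h1
  have hσ₁M : (Mn : ℝ) + 1 ≤ ∑ i ∈ Finset.range (σ₁ (Mn + 1) + 1), a i := by
    have h := hσ₁ (Mn + 1); push_cast at h; linarith
  have hsum_card : ∀ m : ℕ, ∑ i ∈ Finset.range m, a i ≤ (m : ℝ) := by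
    intro m
    calc ∑ i ∈ Finset.range m, a i ≤ ∑ _i ∈ Finset.range m, (1:ℝ) :=
          Finset.sum_le_sum (fun i _ => (ha i).2)
    _ = (m : ℝ) := by simp
  have hσ₁ge : Mn ≤ σ₁ (Mn + 1) := by
    have h2 := hsum_card (σ₁ (Mn + 1) + 1)
    have : (Mn : ℝ) ≤ (σ₁ (Mn + 1) : ℝ) := by push_cast at h2 ⊢; linarith
    exact_mod_cast this
  have hNn : N + 1 ≤ n := by omega
  obtain ⟨p, hnp⟩ : ∃ p : ℕ, n = N + 1 + p := ⟨n - (N+1), by omega⟩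
  -- the unrolled recurrence
  have hfac0 : ∀ j : ℕ, 0 ≤ 1 - (1-α) * a j := by
    intro j
    have h3 : (1-α) * a j ≤ 1 := mul_le_one₀ (by linarith) (ha j).1 (ha j).2
    linarith
  have hfac1 : ∀ j : ℕ, 1 - (1-α) * a j ≤ 1 := by
    intro j
    have h3 : 0 ≤ (1-α) * a j := mul_nonneg (by linarith) (ha j).1
    linarith
  have claim : ∀ q : ℕ, ‖xs (N+1+q+1) - xs (N+1+q)‖ ≤
      (∏ j ∈ Finset.range q, (1 - (1-α) * a (N+2+j))) * ‖xs (N+2) - xs (N+1)‖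
      + ∑ i ∈ Finset.range q,
          (2*K*(|a (N+1+i+1) - a (N+1+i)| + |1 - lam (N+1+i+1) / lam (N+1+i)|)) := by
    intro q
    induction q with
    | zero => simp
    | succ q ih =>
      have hsum0 : 0 ≤ ∑ i ∈ Finset.range q,
          (2*K*(|a (N+1+i+1) - a (N+1+i)| + |1 - lam (N+1+i+1) / lam (N+1+i)|)) :=
        Finset.sum_nonneg (fun i _ => by positivity)
      have hidx : N+2+q = N+1+q+1 := by omega
      show ‖xs (N+1+q+1+1) - xs (N+1+q+1)‖ ≤ _
      rw [Finset.prod_range_succ, Finset.sum_range_succ, hidx]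
      have hr := hrec (N+1+q)
      have ih' := mul_le_mul_of_nonneg_left ih (hfac0 (N+1+q+1))
      have hcS := mul_le_of_le_one_left hsum0 (hfac1 (N+1+q+1))
      have hexpand : (1 - (1-α) * a (N+1+q+1)) *
          ((∏ j ∈ Finset.range q, (1 - (1-α) * a (N+2+j))) * ‖xs (N+2) - xs (N+1)‖
            + ∑ i ∈ Finset.range q,
              (2*K*(|a (N+1+i+1) - a (N+1+i)| + |1 - lam (N+1+i+1) / lam (N+1+i)|)))
          = (∏ j ∈ Finset.range q, (1 - (1-α) * a (N+2+j))) * (1 - (1-α) * a (N+1+q+1))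
              * ‖xs (N+2) - xs (N+1)‖
            + (1 - (1-α) * a (N+1+q+1)) * ∑ i ∈ Finset.range q,
              (2*K*(|a (N+1+i+1) - a (N+1+i)| + |1 - lam (N+1+i+1) / lam (N+1+i)|)) := by
        ring
      refine hr.trans ?_
      refine le_trans (add_le_add_left ih' _) ?_
      rw [hexpand, add_assoc]
      exact add_le_add_right (add_le_add_left hcS _) _
  -- product bound via exponential
  have hprod_le : (∏ j ∈ Finset.range p, (1 - (1-α) * a (N+2+j)))
      ≤ Real.exp (-((1-α) * ∑ j ∈ Finset.range p, a (N+2+j))) := by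
    calc ∏ j ∈ Finset.range p, (1 - (1-α) * a (N+2+j))
        ≤ ∏ j ∈ Finset.range p, Real.exp (-((1-α) * a (N+2+j))) := by
          refine Finset.prod_le_prod (fun j _ => hfac0 _) (fun j _ => ?_)
          have h := Real.add_one_le_exp (-((1-α) * a (N+2+j)))
          linarith
    _ = Real.exp (∑ j ∈ Finset.range p, -((1-α) * a (N+2+j))) := (Real.exp_sum _ _).symm
    _ = Real.exp (-((1-α) * ∑ j ∈ Finset.range p, a (N+2+j))) := by
          congr 1
          rw [Finset.mul_sum, ← Finset.sum_neg_distrib]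
  -- lower bound on the sum of a's
  have hsum_low : ((Mn:ℝ) + 1) - ((N:ℝ) + 2) ≤ ∑ j ∈ Finset.range p, a (N+2+j) := by
    have hsplit : ∑ i ∈ Finset.range (N+2), a i + ∑ i ∈ Finset.Ico (N+2) (N+2+p), a i
        = ∑ i ∈ Finset.range (N+2+p), a i := by
      rw [Finset.range_eq_Ico, Finset.range_eq_Ico]
      exact Finset.sum_Ico_consecutive _ (Nat.zero_le _) (Nat.le_add_right _ _)
    have hIco : ∑ i ∈ Finset.Ico (N+2) (N+2+p), a i = ∑ j ∈ Finset.range p, a (N+2+j) := by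
      have h1 : N + 2 + p - (N + 2) = p := by omega
      rw [Finset.sum_Ico_eq_sum_range, h1]
    have hsub : ∑ i ∈ Finset.range (σ₁ (Mn+1) + 1), a i ≤ ∑ i ∈ Finset.range (N+2+p), a i :=
      Finset.sum_le_sum_of_subset_of_nonneg (Finset.range_subset_range.2 (by omega))
        (fun i _ _ => (ha i).1)
    have hup := hsum_card (N+2)
    push_cast at hup
    linarith [hσ₁M]
  -- the exponent dominates the logarithm
  have hCnat : 0 < 4 * Kz * (k + 1) :=
    Nat.mul_pos (Nat.mul_pos (by norm_num) hKz1) (Nat.succ_pos k)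
  have hC : (0:ℝ) < ((4 * Kz * (k + 1) : ℕ) : ℝ) := by exact_mod_cast hCnat
  have hlogL : Real.log ((4 * Kz * (k + 1) : ℕ) : ℝ) ≤ (L:ℝ) := hLdef ▸ Nat.le_ceil _
  have hexp_low : Real.log ((4 * Kz * (k + 1) : ℕ) : ℝ)
      ≤ (1-α) * ∑ j ∈ Finset.range p, a (N+2+j) := by
    have h1 : (1-α) * (((Mn:ℝ) + 1) - ((N:ℝ) + 2))
        ≤ (1-α) * ∑ j ∈ Finset.range p, a (N+2+j) :=
      mul_le_mul_of_nonneg_left hsum_low (by linarith)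
    have h2 : (L:ℝ) ≤ (1-α) * (((Mn:ℝ) + 1) - ((N:ℝ) + 2)) := by
      have h3 : 0 ≤ α * ((N:ℝ) + 1) := mul_nonneg hα0 (by positivity)
      nlinarith [hMge]
    linarith
  have hprod_final : (∏ j ∈ Finset.range p, (1 - (1-α) * a (N+2+j)))
      ≤ 1 / (4*K*((k:ℝ)+1)) := by
    calc (∏ j ∈ Finset.range p, (1 - (1-α) * a (N+2+j)))
        ≤ Real.exp (-((1-α) * ∑ j ∈ Finset.range p, a (N+2+j))) := hprod_le
    _ ≤ Real.exp (-(Real.log ((4 * Kz * (k + 1) : ℕ) : ℝ))) :=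
        Real.exp_le_exp.mpr (by linarith)
    _ = 1 / ((4 * Kz * (k + 1) : ℕ) : ℝ) := by
        rw [Real.exp_neg, Real.exp_log hC, one_div]
    _ = 1 / (4*K*((k:ℝ)+1)) := by rw [hKdef]; push_cast; ring_nf
  -- error sums
  have hσ₂N : σ₂ (4 * Kz * (2*k+1+1) - 1) ≤ N := by
    rw [← hNdef, hχ (2*k+1)]; exact le_max_left _ _
  have hγ₁N : γ₁ (4 * Kz * (2*k+1+1) - 1) ≤ N := by
    rw [← hNdef, hχ (2*k+1)]; exact le_max_right _ _
  have hSa := hσ₂ (4 * Kz * (2*k+1+1) - 1) N hσ₂N p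
  have hSl := hγ₁ (4 * Kz * (2*k+1+1) - 1) N hγ₁N p
  have hidxcast : ((4 * Kz * (2*k+1+1) - 1 : ℕ) : ℝ) + 1 = 8*(Kz:ℝ)*((k:ℝ)+1) := by
    have hpos : 1 ≤ 4 * Kz * (2*k+1+1) :=
      Nat.mul_pos (Nat.mul_pos (by norm_num) hKz1) (by omega)
    have h2 : (4 * Kz * (2*k+1+1) - 1) + 1 = 4 * Kz * (2*k+1+1) := Nat.sub_add_cancel hpos
    have h3 := congrArg (Nat.cast : ℕ → ℝ) h2
    push_cast at h3
    linarith
  have hconvA : ∑ i ∈ Finset.Icc (N+1) (N+p), |a i - a (i+1)|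
      = ∑ i ∈ Finset.range p, |a (N+1+i) - a (N+1+i+1)| := by
    have h1 : N + p + 1 - (N + 1) = p := by omega
    rw [← Finset.Ico_add_one_right_eq_Icc, Finset.sum_Ico_eq_sum_range, h1]
  have hconvL : ∑ i ∈ Finset.Icc (N+1) (N+p), |1 - lam (i+1) / lam i|
      = ∑ i ∈ Finset.range p, |1 - lam (N+1+i+1) / lam (N+1+i)| := by
    have h1 : N + p + 1 - (N + 1) = p := by omega
    rw [← Finset.Ico_add_one_right_eq_Icc, Finset.sum_Ico_eq_sum_range, h1]
  have hSa' : ∑ i ∈ Finset.range p, |a (N+1+i+1) - a (N+1+i)|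
      ≤ 1 / (8*(Kz:ℝ)*((k:ℝ)+1)) := by
    have h0 : ∑ i ∈ Finset.range p, |a (N+1+i+1) - a (N+1+i)|
        = ∑ i ∈ Finset.range p, |a (N+1+i) - a (N+1+i+1)| := by
      refine Finset.sum_congr rfl (fun i _ => ?_)
      exact abs_sub_comm _ _
    rw [h0, ← hconvA, ← hidxcast]
    exact hSa
  have hSl' : ∑ i ∈ Finset.range p, |1 - lam (N+1+i+1) / lam (N+1+i)|
      ≤ 1 / (8*(Kz:ℝ)*((k:ℝ)+1)) := by
    rw [← hconvL, ← hidxcast]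
    exact hSl
  have hE : ∑ i ∈ Finset.range p,
      (2*K*(|a (N+1+i+1) - a (N+1+i)| + |1 - lam (N+1+i+1) / lam (N+1+i)|))
      ≤ 1 / (2*((k:ℝ)+1)) := by
    have e1 : ∑ i ∈ Finset.range p,
        (2*K*(|a (N+1+i+1) - a (N+1+i)| + |1 - lam (N+1+i+1) / lam (N+1+i)|))
        = 2*K*((∑ i ∈ Finset.range p, |a (N+1+i+1) - a (N+1+i)|)
          + ∑ i ∈ Finset.range p, |1 - lam (N+1+i+1) / lam (N+1+i)|) := by
      rw [← Finset.mul_sum, Finset.sum_add_distrib]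
    have hk1 : (0:ℝ) < (k:ℝ) + 1 := by positivity
    have heq : 2*K*(1/(8*(Kz:ℝ)*((k:ℝ)+1)) + 1/(8*(Kz:ℝ)*((k:ℝ)+1))) = 1/(2*((k:ℝ)+1)) := by
      rw [hKdef]
      have hKne : ((Kz:ℝ)) ≠ 0 := by positivity
      field_simp
      ring
    rw [e1]
    calc 2*K*((∑ i ∈ Finset.range p, |a (N+1+i+1) - a (N+1+i)|)
          + ∑ i ∈ Finset.range p, |1 - lam (N+1+i+1) / lam (N+1+i)|)
        ≤ 2*K*(1/(8*(Kz:ℝ)*((k:ℝ)+1)) + 1/(8*(Kz:ℝ)*((k:ℝ)+1))) := by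
          refine mul_le_mul_of_nonneg_left ?_ (by positivity)
          exact add_le_add hSa' hSl'
    _ = 1/(2*((k:ℝ)+1)) := heq
  -- conclusion
  rw [hnp]
  have hclaim := claim p
  have hs1 : ‖xs (N+2) - xs (N+1)‖ ≤ 2*K := hsb (N+1)
  have hP0 : 0 ≤ ∏ j ∈ Finset.range p, (1 - (1-α) * a (N+2+j)) :=
    Finset.prod_nonneg (fun j _ => hfac0 _)
  have hPs : (∏ j ∈ Finset.range p, (1 - (1-α) * a (N+2+j))) * ‖xs (N+2) - xs (N+1)‖
      ≤ (1 / (4*K*((k:ℝ)+1))) * (2*K) :=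
    mul_le_mul hprod_final hs1 (norm_nonneg _) (by positivity)
  have heq1 : (1 / (4*K*((k:ℝ)+1))) * (2*K) = 1/(2*((k:ℝ)+1)) := by
    rw [hKdef]
    have hKne : ((Kz:ℝ)) ≠ 0 := by positivity
    have hk1 : ((k:ℝ)+1) ≠ 0 := by positivity
    field_simp
    ring
  have heq2 : 1/(2*((k:ℝ)+1)) + 1/(2*((k:ℝ)+1)) = 1/((k:ℝ)+1) := by
    have hk1 : ((k:ℝ)+1) ≠ 0 := by positivity
    field_simp
    norm_num
  linarith [hclaim, hPs, hE]
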